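/- Let p be a prime, r = p^t with t ≥ 1, and α = Σ_{n≥0} T^{-r^n} ∈ 𝔽_p((1/T)) (i.e., α = T^{-1} + T^{-r} + T^{-r²} + ...). Then α satisfies the algebraic equation α = T^{-1} + α^r over 𝔽_p(T), and α is irrational (not in 𝔽_p(T)). -/

import Mathlib

open scoped Classical

private lemma ps_coeff_pow_char (p : ℕ) [hp : Fact p.Prime] (f : PowerSeries (ZMod p)) (m : ℕ) :
    PowerSeries.coeff (R := ZMod p) m (f ^ p) =
      if p ∣ m then PowerSeries.coeff (R := ZMod p) (m / p) f else 0 := by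
  have hp0 : 0 < p := hp.out.pos
  set g : Polynomial (ZMod p) := PowerSeries.trunc (m + 1) f with hg
  have key : PowerSeries.coeff (R := ZMod p) m (f ^ p) = (g ^ p).coeff m := by
    have h := congrArg (fun q => Polynomial.coeff q m) (PowerSeries.trunc_trunc_pow f (m + 1) p)
    simp only [PowerSeries.coeff_trunc, if_pos (Nat.lt_succ_self m)] at h
    rw [← h, ← Polynomial.coeff_coe, Polynomial.coe_pow]
  have hgp : g ^ p = Polynomial.expand (ZMod p) p g := by
    rw [← Polynomial.map_frobenius_expand p g, ZMod.frobenius_zmod, Polynomial.map_id]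
  rw [key, hgp, Polynomial.coeff_expand hp0]
  split_ifs with h
  · rw [hg, PowerSeries.coeff_trunc, if_pos (Nat.lt_succ_of_le (Nat.div_le_self m p))]
  · rfl

private lemma ps_coeff_pow_char_pow (p : ℕ) [hp : Fact p.Prime] (f : PowerSeries (ZMod p))
    (t : ℕ) (m : ℕ) :
    PowerSeries.coeff (R := ZMod p) m (f ^ p ^ t) =
      if p ^ t ∣ m then PowerSeries.coeff (R := ZMod p) (m / p ^ t) f else 0 := by
  have hp0 : 0 < p := hp.out.pos
  induction t generalizing m with
  | zero => simp
  | succ t ih =>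
    rw [pow_succ, pow_mul, ps_coeff_pow_char, ih]
    by_cases h1 : p ∣ m
    · rw [if_pos h1]
      have hdd : p ^ t ∣ m / p ↔ p ^ t * p ∣ m := by
        rw [Nat.dvd_div_iff_mul_dvd h1, mul_comm]
      by_cases h2 : p ^ t * p ∣ m
      · rw [if_pos (hdd.mpr h2), if_pos h2, Nat.div_div_eq_div_mul, mul_comm p (p ^ t)]
      · rw [if_neg (fun hh => h2 (hdd.mp hh)), if_neg h2]
    · rw [if_neg h1, if_neg (fun hh => h1 (dvd_trans (dvd_mul_left p (p ^ t)) hh))]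

private lemma ratfunc_intDegree_pow {K : Type*} [Field K] (f : RatFunc K) (hf : f ≠ 0) (n : ℕ) :
    (f ^ n).intDegree = n * f.intDegree := by
  induction n with
  | zero => simp [RatFunc.intDegree_one]
  | succ n ih =>
    rw [pow_succ, RatFunc.intDegree_mul (pow_ne_zero n hf) hf, ih]
    push_cast
    ring

/-- Let `p` be a prime, `r = p^t` with `t ≥ 1`, and
`α = Σ_{n≥0} T^{-rⁿ} ∈ 𝔽_p((1/T))` (modelled as Laurent series in `X = 1/T`,
so `α = Σ_{n≥0} X^{rⁿ}`, the power series whose coefficient at `m` is 1 iff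
`m` is a power `rⁿ`). Then `α = T⁻¹ + α^r` and `α` is irrational, i.e. not
the expansion of any rational function. -/
theorem mahler_example (p : ℕ) [hp : Fact p.Prime] (t : ℕ) (ht : 1 ≤ t)
    (r : ℕ) (hr : r = p ^ t)
    (α : LaurentSeries (ZMod p))
    (hα : α = ((PowerSeries.mk fun m =>
      if ∃ n : ℕ, m = r ^ n then (1 : ZMod p) else 0) : PowerSeries (ZMod p))) :
    α = ((PowerSeries.X : PowerSeries (ZMod p)) : LaurentSeries (ZMod p)) + α ^ r ∧
    ∀ f : RatFunc (ZMod p), (f : LaurentSeries (ZMod p)) ≠ α := by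
  have hp2 : 2 ≤ p := hp.out.two_le
  have hr2 : 2 ≤ r := by
    rw [hr]
    calc 2 ≤ p := hp2
    _ ≤ p ^ t := Nat.le_self_pow (by omega) p
  have hr0 : 0 < r := by omega
  set β : PowerSeries (ZMod p) :=
    PowerSeries.mk fun m => if ∃ n : ℕ, m = r ^ n then (1 : ZMod p) else 0 with hβ
  -- the key power series identity
  have hβr : β = PowerSeries.X + β ^ r := by
    ext m
    rw [map_add, hr, ps_coeff_pow_char_pow, ← hr, PowerSeries.coeff_X]
    simp only [hβ, PowerSeries.coeff_mk]
    by_cases hm1 : m = 1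
    · subst hm1
      rw [if_pos ⟨0, (pow_zero r).symm⟩, if_pos rfl,
        if_neg (fun h => absurd (Nat.le_of_dvd one_pos h) (by omega))]
      ring
    · rw [if_neg hm1]
      by_cases hd : r ∣ m
      · by_cases he : ∃ n : ℕ, m / r = r ^ n
        · rw [if_pos hd, if_pos he, if_pos]
          · ring
          · obtain ⟨n, hn⟩ := he
            exact ⟨n + 1, by rw [pow_succ', ← hn, Nat.mul_div_cancel' hd]⟩
        · rw [if_pos hd, if_neg he, if_neg]
          · ring
          · rintro ⟨n, rfl⟩
            match n with
            | 0 => exact hm1 (pow_zero r)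
            | Nat.succ k =>
              exact he ⟨k, by rw [pow_succ, Nat.mul_div_cancel _ hr0]⟩
      · rw [if_neg hd, if_neg]
        · ring
        · rintro ⟨n, rfl⟩
          match n with
          | 0 => exact hm1 (pow_zero r)
          | Nat.succ k => exact hd (dvd_pow_self r (Nat.succ_ne_zero k))
  -- lift to Laurent series
  have h1 : α = ((PowerSeries.X : PowerSeries (ZMod p)) : LaurentSeries (ZMod p)) + α ^ r := by
    rw [hα]
    conv_lhs => rw [hβr]
    rw [PowerSeries.coe_add, PowerSeries.coe_pow]
  refine ⟨h1, fun f hf => ?_⟩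
  -- transfer the identity to RatFunc
  have hfe : f = RatFunc.X + f ^ r := by
    apply (show Function.Injective (fun g : RatFunc (ZMod p) => (g : LaurentSeries (ZMod p))) from
      fun a b h => RingHom.injective _ h)
    simp only
    rw [map_add, map_pow, RatFunc.coe_X, ← PowerSeries.coe_X, hf]
    exact h1
  have hf0 : f ≠ 0 := by
    rintro rfl
    rw [zero_pow (by omega : r ≠ 0), add_zero] at hfe
    exact RatFunc.X_ne_zero hfe.symm
  have hfr0 : f ^ r ≠ 0 := pow_ne_zero r hf0
  have hdpow : (f ^ r).intDegree = (r : ℤ) * f.intDegree := ratfunc_intDegree_pow f hf0 r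
  set d : ℤ := f.intDegree with hdd
  rcases le_or_gt d 0 with hd0 | hd1
  · -- X = f - f^r, degree ≤ 0 < 1
    have hX : RatFunc.X = f + -(f ^ r) := by linear_combination -hfe
    have hle := RatFunc.intDegree_add_le (neg_ne_zero.mpr hfr0)
      (by rw [← hX]; exact RatFunc.X_ne_zero)
    rw [← hX, RatFunc.intDegree_X, RatFunc.intDegree_neg, hdpow, ← hdd] at hle
    have hrd : (r : ℤ) * d ≤ 0 :=
      mul_nonpos_of_nonneg_of_nonpos (by positivity) hd0
    omega
  · -- f^r = f - X, degree r*d > max(d, 1)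
    have hX : f ^ r = f + -RatFunc.X := by linear_combination -hfe
    have hle := RatFunc.intDegree_add_le (neg_ne_zero.mpr RatFunc.X_ne_zero)
      (by rw [← hX]; exact hfr0)
    rw [← hX, RatFunc.intDegree_neg, RatFunc.intDegree_X, hdpow, ← hdd] at hle
    have hrd : 2 * d ≤ (r : ℤ) * d :=
      mul_le_mul_of_nonneg_right (by exact_mod_cast hr2) (by omega)
    omega
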